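/- Let (X₁, X₂) and (X₃, X₄, X₅) be independent Gaussian vectors, with (X₁, X₂) centered and nondegenerate (positive-definite covariance) in ℝ², and (X₃, X₄, X₅) having all moments finite. Then for every 0 ≤ α < 1, E[ |(X₂²X₃ − 2X₁X₂X₄ + X₁²X₅)/(X₁² + X₂²)^{3/2}|^{1+α} ] < ∞. -/

import Mathlib

open MeasureTheory ProbabilityTheory

lemma aux_abs_rpow_integrableOn {q : ℝ} (hq1 : q < 1) :
    IntegrableOn (fun x : ℝ => |x| ^ (-q)) (Set.Icc (-1 : ℝ) 1) volume := by
  have h1 : IntegrableOn (fun x : ℝ => |x| ^ (-q)) (Set.Icc (0:ℝ) 1) volume := by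
    rw [integrableOn_Icc_iff_integrableOn_Ioc]
    have h := intervalIntegral.intervalIntegrable_rpow' (a := 0) (b := 1) (by linarith : (-1:ℝ) < -q)
    rw [intervalIntegrable_iff, Set.uIoc_of_le zero_le_one] at h
    exact h.congr_fun (fun x hx => by rw [abs_of_pos hx.1]) measurableSet_Ioc
  have h2 : IntegrableOn (fun x : ℝ => |x| ^ (-q)) (Set.Icc (-1:ℝ) 0) volume := by
    have hmap : (volume.restrict (Set.Icc (0:ℝ) 1)).map Neg.neg
        = volume.restrict (Set.Icc (-1:ℝ) 0) := by
      conv_rhs => rw [← Measure.map_neg_eq_self (volume : Measure ℝ),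
        measurableEmbedding_neg.restrict_map]
      congr 1
      ext x
      simp
    rw [IntegrableOn, ← hmap, measurableEmbedding_neg.integrable_map_iff]
    have : (fun x : ℝ => |x| ^ (-q)) ∘ Neg.neg = fun x : ℝ => |x| ^ (-q) := by
      funext x; simp [abs_neg]
    rw [this]
    exact h1
  have : Set.Icc (-1:ℝ) 1 = Set.Icc (-1:ℝ) 0 ∪ Set.Icc (0:ℝ) 1 :=
    (Set.Icc_union_Icc_eq_Icc (by norm_num) (by norm_num)).symm
  rw [this]
  exact h2.union h1

lemma aux_gauss {q : ℝ} (hq0 : 0 ≤ q) (hq1 : q < 1) :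
    Integrable (fun x : ℝ => |x| ^ (-q)) (gaussianReal 0 1) := by
  rw [gaussianReal_of_var_ne_zero _ one_ne_zero, gaussianPDF_def,
    integrable_withDensity_iff ((measurable_gaussianPDFReal 0 1).ennreal_ofReal)
      (ae_of_all _ fun x => ENNReal.ofReal_lt_top)]
  have heq : (fun x : ℝ => |x| ^ (-q) * (ENNReal.ofReal (gaussianPDFReal 0 1 x)).toReal)
      = fun x : ℝ => |x| ^ (-q) * gaussianPDFReal 0 1 x := by
    funext x; rw [ENNReal.toReal_ofReal (gaussianPDFReal_nonneg _ _ _)]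
  rw [heq]
  have hpdf_nonneg : ∀ x : ℝ, 0 ≤ gaussianPDFReal 0 1 x := gaussianPDFReal_nonneg 0 1
  have hpdf_le : ∀ x : ℝ, gaussianPDFReal 0 1 x ≤ 1 := by
    intro x
    have heq2 : gaussianPDFReal 0 1 x
        = (Real.sqrt (2 * Real.pi))⁻¹ * Real.exp (-x ^ 2 / 2) := by
      rw [gaussianPDFReal]
      norm_num
    rw [heq2]
    have h1 : Real.exp (-x ^ 2 / 2) ≤ 1 := by
      rw [Real.exp_le_one_iff]
      nlinarith [sq_nonneg x]
    have h2 : (Real.sqrt (2 * Real.pi))⁻¹ ≤ 1 := by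
      rw [inv_le_one_iff₀]
      right
      rw [Real.le_sqrt' one_pos]
      nlinarith [Real.pi_gt_three]
    calc (Real.sqrt (2 * Real.pi))⁻¹ * Real.exp (-x ^ 2 / 2)
        ≤ 1 * 1 := mul_le_mul h2 h1 (Real.exp_nonneg _) one_pos.le
      _ = 1 := by norm_num
  refine Integrable.mono'
    (g := fun x : ℝ => (Set.Icc (-1:ℝ) 1).indicator (fun x => |x| ^ (-q)) x
      + gaussianPDFReal 0 1 x) ?_ ?_ ?_
  · exact ((aux_abs_rpow_integrableOn hq1).integrable_indicator measurableSet_Icc).add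
      (integrable_gaussianPDFReal 0 1)
  · exact ((measurable_id.abs.pow_const _).mul (measurable_gaussianPDFReal 0 1)).aestronglyMeasurable
  · refine ae_of_all _ fun x => ?_
    rw [Real.norm_eq_abs, abs_of_nonneg
      (mul_nonneg (Real.rpow_nonneg (abs_nonneg _) _) (hpdf_nonneg x))]
    rcases le_or_gt (|x|) 1 with hx | hx
    · have hin : x ∈ Set.Icc (-1:ℝ) 1 := by
        constructor <;> [linarith [neg_abs_le x]; linarith [le_abs_self x]]
      rw [Set.indicator_of_mem hin]
      calc |x| ^ (-q) * gaussianPDFReal 0 1 x ≤ |x| ^ (-q) * 1 :=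
            mul_le_mul_of_nonneg_left (hpdf_le x) (Real.rpow_nonneg (abs_nonneg _) _)
        _ = |x| ^ (-q) := mul_one _
        _ ≤ |x| ^ (-q) + gaussianPDFReal 0 1 x := le_add_of_nonneg_right (hpdf_nonneg x)
    · have h1 : |x| ^ (-q) ≤ 1 :=
        Real.rpow_le_one_of_one_le_of_nonpos hx.le (by linarith)
      calc |x| ^ (-q) * gaussianPDFReal 0 1 x ≤ 1 * gaussianPDFReal 0 1 x :=
            mul_le_mul_of_nonneg_right h1 (hpdf_nonneg x)
        _ = gaussianPDFReal 0 1 x := one_mul _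
        _ ≤ _ := le_add_of_nonneg_left (Set.indicator_nonneg
            (fun y _ => Real.rpow_nonneg (abs_nonneg _) _) x)


set_option maxHeartbeats 1000000 in
/-- If `(X₁,X₂)` is a centered nondegenerate Gaussian vector in `ℝ²`
(realized as an invertible linear image of two independent standard Gaussians),
independent of a vector `(X₃,X₄,X₅)` with all moments finite, then the
curvature-type random variable has finite `(1+α)`-moment for `0 ≤ α < 1`. -/
theorem curvature_moment_finite
    {Ω : Type*} [MeasurableSpace Ω] (μ : Measure Ω) [IsProbabilityMeasure μ]
    (Z₁ Z₂ X₁ X₂ X₃ X₄ X₅ : Ω → ℝ)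
    (hZ₁ : Measurable Z₁) (hZ₂ : Measurable Z₂)
    (hX₃ : Measurable X₃) (hX₄ : Measurable X₄) (hX₅ : Measurable X₅)
    (hZindep : IndepFun Z₁ Z₂ μ)
    (hlaw₁ : Measure.map Z₁ μ = gaussianReal 0 1)
    (hlaw₂ : Measure.map Z₂ μ = gaussianReal 0 1)
    (A : Matrix (Fin 2) (Fin 2) ℝ) (hA : IsUnit A.det)
    (hX₁ : ∀ ω, X₁ ω = A 0 0 * Z₁ ω + A 0 1 * Z₂ ω)
    (hX₂ : ∀ ω, X₂ ω = A 1 0 * Z₁ ω + A 1 1 * Z₂ ω)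
    (hindep : IndepFun (fun ω => (Z₁ ω, Z₂ ω)) (fun ω => (X₃ ω, X₄ ω, X₅ ω)) μ)
    (hmom : ∀ n : ℕ, Integrable (fun ω => ‖(X₃ ω, X₄ ω, X₅ ω)‖ ^ n) μ)
    (α : ℝ) (hα₀ : 0 ≤ α) (hα₁ : α < 1) :
    Integrable
      (fun ω =>
        |(X₂ ω ^ 2 * X₃ ω - 2 * X₁ ω * X₂ ω * X₄ ω + X₁ ω ^ 2 * X₅ ω) /
            (X₁ ω ^ 2 + X₂ ω ^ 2) ^ ((3:ℝ)/2)| ^ (1 + α)) μ := by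
  have hp0 : (0:ℝ) ≤ 1 + α := by linarith
  have hp2 : (1:ℝ) + α ≤ 2 := by linarith
  set q : ℝ := (1 + α) / 2 with hq_def
  have hq0 : 0 ≤ q := by simp only [hq_def]; linarith
  have hq1 : q < 1 := by simp only [hq_def]; linarith
  -- measurability of X₁, X₂
  have mX₁ : Measurable X₁ := by
    rw [show X₁ = fun ω => A 0 0 * Z₁ ω + A 0 1 * Z₂ ω from funext hX₁]
    exact (hZ₁.const_mul _).add (hZ₂.const_mul _)
  have mX₂ : Measurable X₂ := by
    rw [show X₂ = fun ω => A 1 0 * Z₁ ω + A 1 1 * Z₂ ω from funext hX₂]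
    exact (hZ₁.const_mul _).add (hZ₂.const_mul _)
  -- the inverse matrix
  obtain ⟨B, hBA⟩ : ∃ B : Matrix (Fin 2) (Fin 2) ℝ, B * A = 1 :=
    ⟨A⁻¹, Matrix.nonsing_inv_mul A hA⟩
  have e00 : B 0 0 * A 0 0 + B 0 1 * A 1 0 = 1 := by
    have h := congrFun (congrFun hBA 0) 0
    simpa [Matrix.mul_apply, Fin.sum_univ_two, Matrix.one_apply] using h
  have e01 : B 0 0 * A 0 1 + B 0 1 * A 1 1 = 0 := by
    have h := congrFun (congrFun hBA 0) 1
    simpa [Matrix.mul_apply, Fin.sum_univ_two, Matrix.one_apply] using h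
  have e10 : B 1 0 * A 0 0 + B 1 1 * A 1 0 = 0 := by
    have h := congrFun (congrFun hBA 1) 0
    simpa [Matrix.mul_apply, Fin.sum_univ_two, Matrix.one_apply] using h
  have e11 : B 1 0 * A 0 1 + B 1 1 * A 1 1 = 1 := by
    have h := congrFun (congrFun hBA 1) 1
    simpa [Matrix.mul_apply, Fin.sum_univ_two, Matrix.one_apply] using h
  have hZ₁eq : ∀ ω, Z₁ ω = B 0 0 * X₁ ω + B 0 1 * X₂ ω := by
    intro ω; rw [hX₁, hX₂]
    linear_combination (-(Z₁ ω)) * e00 + (-(Z₂ ω)) * e01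
  have hZ₂eq : ∀ ω, Z₂ ω = B 1 0 * X₁ ω + B 1 1 * X₂ ω := by
    intro ω; rw [hX₁, hX₂]
    linear_combination (-(Z₁ ω)) * e10 + (-(Z₂ ω)) * e11
  set K : ℝ := 2 * (B 0 0 ^ 2 + B 0 1 ^ 2 + B 1 0 ^ 2 + B 1 1 ^ 2) + 1 with hK_def
  have hK1 : (1:ℝ) ≤ K := by
    simp only [hK_def]
    nlinarith [sq_nonneg (B 0 0), sq_nonneg (B 0 1), sq_nonneg (B 1 0), sq_nonneg (B 1 1)]
  have hK0 : (0:ℝ) < K := lt_of_lt_of_le one_pos hK1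
  have hKS : ∀ ω, Z₁ ω ^ 2 + Z₂ ω ^ 2 ≤ K * (X₁ ω ^ 2 + X₂ ω ^ 2) := by
    intro ω
    rw [hZ₁eq ω, hZ₂eq ω]
    simp only [hK_def]
    nlinarith [sq_nonneg (B 0 0 * X₂ ω - B 0 1 * X₁ ω), sq_nonneg (B 1 0 * X₂ ω - B 1 1 * X₁ ω),
      sq_nonneg (X₁ ω), sq_nonneg (X₂ ω)]
  -- a.e. nonvanishing of Z₁, Z₂
  have haeZ : ∀ (Z : Ω → ℝ), Measurable Z → Measure.map Z μ = gaussianReal 0 1 →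
      (∀ᵐ ω ∂μ, Z ω ≠ 0) := by
    intro Z hZ hlaw
    have h0 : μ (Z ⁻¹' {0}) = 0 := by
      have h := Measure.map_apply (μ := μ) hZ (measurableSet_singleton (0:ℝ))
      rw [hlaw] at h
      rw [← h]
      exact gaussianReal_absolutelyContinuous _ one_ne_zero (Real.volume_singleton)
    rw [ae_iff]
    convert h0 using 2
    ext ω
    simp
  have haeZ₁ := haeZ Z₁ hZ₁ hlaw₁
  have haeZ₂ := haeZ Z₂ hZ₂ hlaw₂
  -- integrability of the dominating function
  have intZ : ∀ (Z : Ω → ℝ), Measurable Z → Measure.map Z μ = gaussianReal 0 1 →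
      Integrable (fun ω => |Z ω| ^ (-q)) μ := by
    intro Z hZ hlaw
    have h := aux_gauss hq0 hq1
    rw [← hlaw] at h
    exact (integrable_map_measure (measurable_id.abs.pow_const _).aestronglyMeasurable
      hZ.aemeasurable).mp h
  have hu_indep : IndepFun (fun ω => |Z₁ ω| ^ (-q)) (fun ω => |Z₂ ω| ^ (-q)) μ :=
    hZindep.comp (measurable_id.abs.pow_const _) (measurable_id.abs.pow_const _)
  have hu : Integrable (fun ω => |Z₁ ω| ^ (-q) * |Z₂ ω| ^ (-q)) μ :=
    hu_indep.integrable_mul (intZ Z₁ hZ₁ hlaw₁) (intZ Z₂ hZ₂ hlaw₂)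
  have hg : Integrable (fun ω => 9 * (1 + ‖(X₃ ω, X₄ ω, X₅ ω)‖ ^ 2)) μ :=
    ((integrable_const (1:ℝ)).add (hmom 2)).const_mul 9
  have huv_indep : IndepFun (fun ω => |Z₁ ω| ^ (-q) * |Z₂ ω| ^ (-q))
      (fun ω => 9 * (1 + ‖(X₃ ω, X₄ ω, X₅ ω)‖ ^ 2)) μ := by
    exact hindep.comp
      ((measurable_fst.abs.pow_const _).mul (measurable_snd.abs.pow_const _))
      ((measurable_const.add (measurable_norm.pow_const 2)).const_mul 9)
  have hh : Integrable (fun ω => K ^ q *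
      ((|Z₁ ω| ^ (-q) * |Z₂ ω| ^ (-q)) * (9 * (1 + ‖(X₃ ω, X₄ ω, X₅ ω)‖ ^ 2)))) μ :=
    (huv_indep.integrable_mul hu hg).const_mul _
  -- measurability of the target
  have mT : AEStronglyMeasurable
      (fun ω => |(X₂ ω ^ 2 * X₃ ω - 2 * X₁ ω * X₂ ω * X₄ ω + X₁ ω ^ 2 * X₅ ω) /
          (X₁ ω ^ 2 + X₂ ω ^ 2) ^ ((3:ℝ)/2)| ^ (1 + α)) μ := by
    apply Measurable.aestronglyMeasurable
    apply Measurable.pow_const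
    apply Measurable.abs
    exact ((((mX₂.pow_const 2).mul hX₃).sub
      (((measurable_const.mul mX₁).mul mX₂).mul hX₄)).add
      ((mX₁.pow_const 2).mul hX₅)).div
      (((mX₁.pow_const 2).add (mX₂.pow_const 2)).pow_const _)
  refine hh.mono' mT ?_
  filter_upwards [haeZ₁, haeZ₂] with ω h1 h2
  set S : ℝ := X₁ ω ^ 2 + X₂ ω ^ 2 with hS_def
  set Y : ℝ := |X₃ ω| + |X₄ ω| + |X₅ ω| with hY_def
  set w : ℝ := |Z₁ ω| * |Z₂ ω| with hw_def
  have hw : 0 < w := mul_pos (abs_pos.2 h1) (abs_pos.2 h2)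
  have hzz : w ≤ Z₁ ω ^ 2 + Z₂ ω ^ 2 := by
    simp only [hw_def]
    nlinarith [sq_nonneg (|Z₁ ω| - |Z₂ ω|), sq_abs (Z₁ ω), sq_abs (Z₂ ω),
      abs_nonneg (Z₁ ω), abs_nonneg (Z₂ ω)]
  have hKS' : 0 < K * S := lt_of_lt_of_le hw (hzz.trans (hKS ω))
  have hS0 : 0 < S := by
    rcases lt_or_ge 0 S with h | h
    · exact h
    · exfalso
      have hns : K * S ≤ 0 := mul_nonpos_of_nonneg_of_nonpos hK0.le h
      linarith
  have hSw : K⁻¹ * w ≤ S := by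
    rw [inv_mul_le_iff₀ hK0]
    exact hzz.trans (hKS ω)
  have hwK : 0 < K⁻¹ * w := mul_pos (inv_pos.2 hK0) hw
  have hY0 : 0 ≤ Y := by simp only [hY_def]; positivity
  -- |N| ≤ S * Y
  have hN : |X₂ ω ^ 2 * X₃ ω - 2 * X₁ ω * X₂ ω * X₄ ω + X₁ ω ^ 2 * X₅ ω| ≤ S * Y := by
    have t1 : |X₂ ω ^ 2 * X₃ ω| ≤ S * |X₃ ω| := by
      rw [abs_mul, abs_of_nonneg (sq_nonneg (X₂ ω))]
      apply mul_le_mul_of_nonneg_right _ (abs_nonneg _)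
      nlinarith [sq_nonneg (X₁ ω)]
    have t2 : |2 * X₁ ω * X₂ ω * X₄ ω| ≤ S * |X₄ ω| := by
      rw [abs_mul, abs_mul, abs_mul, abs_two]
      apply mul_le_mul_of_nonneg_right _ (abs_nonneg _)
      nlinarith [sq_nonneg (|X₁ ω| - |X₂ ω|), sq_abs (X₁ ω), sq_abs (X₂ ω)]
    have t3 : |X₁ ω ^ 2 * X₅ ω| ≤ S * |X₅ ω| := by
      rw [abs_mul, abs_of_nonneg (sq_nonneg (X₁ ω))]
      apply mul_le_mul_of_nonneg_right _ (abs_nonneg _)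
      nlinarith [sq_nonneg (X₂ ω)]
    calc |X₂ ω ^ 2 * X₃ ω - 2 * X₁ ω * X₂ ω * X₄ ω + X₁ ω ^ 2 * X₅ ω|
        ≤ |X₂ ω ^ 2 * X₃ ω - 2 * X₁ ω * X₂ ω * X₄ ω| + |X₁ ω ^ 2 * X₅ ω| := abs_add_le _ _
      _ ≤ (|X₂ ω ^ 2 * X₃ ω| + |2 * X₁ ω * X₂ ω * X₄ ω|) + |X₁ ω ^ 2 * X₅ ω| :=
          add_le_add (abs_sub _ _) le_rfl
      _ ≤ (S * |X₃ ω| + S * |X₄ ω|) + S * |X₅ ω| := by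
          exact add_le_add (add_le_add t1 t2) t3
      _ = S * Y := by simp only [hY_def]; ring
  -- Y^(1+α) ≤ 9 * (1 + ‖V‖²)
  have hYV : Y ^ (1 + α) ≤ 9 * (1 + ‖(X₃ ω, X₄ ω, X₅ ω)‖ ^ 2) := by
    have a3 : |X₃ ω| ≤ ‖(X₃ ω, X₄ ω, X₅ ω)‖ := by
      simpa [Real.norm_eq_abs] using norm_fst_le (X₃ ω, X₄ ω, X₅ ω)
    have a4 : |X₄ ω| ≤ ‖(X₃ ω, X₄ ω, X₅ ω)‖ := by
      have h := (norm_fst_le (X₄ ω, X₅ ω)).trans (norm_snd_le (X₃ ω, X₄ ω, X₅ ω))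
      simpa [Real.norm_eq_abs] using h
    have a5 : |X₅ ω| ≤ ‖(X₃ ω, X₄ ω, X₅ ω)‖ := by
      have h := (norm_snd_le (X₄ ω, X₅ ω)).trans (norm_snd_le (X₃ ω, X₄ ω, X₅ ω))
      simpa [Real.norm_eq_abs] using h
    have hY3 : Y ≤ 3 * ‖(X₃ ω, X₄ ω, X₅ ω)‖ := by
      simp only [hY_def]; linarith
    have step1 : Y ^ (1 + α) ≤ (3 * ‖(X₃ ω, X₄ ω, X₅ ω)‖) ^ (1 + α) :=
      Real.rpow_le_rpow hY0 hY3 hp0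
    rcases le_or_gt (3 * ‖(X₃ ω, X₄ ω, X₅ ω)‖) 1 with hc | hc
    · have : (3 * ‖(X₃ ω, X₄ ω, X₅ ω)‖) ^ (1 + α) ≤ 1 :=
        Real.rpow_le_one (by positivity) hc hp0
      nlinarith [sq_nonneg ‖(X₃ ω, X₄ ω, X₅ ω)‖]
    · have h2' : (3 * ‖(X₃ ω, X₄ ω, X₅ ω)‖) ^ (1 + α)
          ≤ (3 * ‖(X₃ ω, X₄ ω, X₅ ω)‖) ^ (2:ℝ) :=
        Real.rpow_le_rpow_of_exponent_le hc.le hp2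
      rw [Real.rpow_two] at h2'
      nlinarith [norm_nonneg (X₃ ω, X₄ ω, X₅ ω)]
  -- the inverse power bound
  have hSq : S ^ (-q) ≤ K ^ q * (|Z₁ ω| ^ (-q) * |Z₂ ω| ^ (-q)) := by
    have step : S ^ (-q) ≤ (K⁻¹ * w) ^ (-q) :=
      Real.rpow_le_rpow_of_nonpos hwK hSw (neg_nonpos.2 hq0)
    have e : (K⁻¹ * w) ^ (-q) = K ^ q * (|Z₁ ω| ^ (-q) * |Z₂ ω| ^ (-q)) := by
      rw [Real.mul_rpow (inv_nonneg.2 hK0.le) hw.le, Real.inv_rpow hK0.le,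
        Real.rpow_neg hK0.le, inv_inv, hw_def,
        Real.mul_rpow (abs_nonneg _) (abs_nonneg _)]
    rw [e] at step
    exact step
  -- main chain
  rw [Real.norm_eq_abs, abs_of_nonneg (Real.rpow_nonneg (abs_nonneg _) _)]
  have hR0 : (0:ℝ) < S ^ ((1:ℝ)/2) := Real.rpow_pos_of_pos hS0 _
  have hdiv : |(X₂ ω ^ 2 * X₃ ω - 2 * X₁ ω * X₂ ω * X₄ ω + X₁ ω ^ 2 * X₅ ω) /
      S ^ ((3:ℝ)/2)| ≤ Y / S ^ ((1:ℝ)/2) := by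
    rw [abs_div, abs_of_nonneg (Real.rpow_nonneg hS0.le _)]
    rw [div_le_div_iff₀ (Real.rpow_pos_of_pos hS0 _) hR0]
    have h32 : S ^ ((3:ℝ)/2) = S ^ ((1:ℝ)/2) * S := by
      rw [show (3:ℝ)/2 = 1/2 + 1 by norm_num, Real.rpow_add hS0, Real.rpow_one]
    rw [h32]
    calc |X₂ ω ^ 2 * X₃ ω - 2 * X₁ ω * X₂ ω * X₄ ω + X₁ ω ^ 2 * X₅ ω| * S ^ ((1:ℝ)/2)
        ≤ (S * Y) * S ^ ((1:ℝ)/2) := mul_le_mul_of_nonneg_right hN hR0.le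
      _ = Y * (S ^ ((1:ℝ)/2) * S) := by ring
  calc |(X₂ ω ^ 2 * X₃ ω - 2 * X₁ ω * X₂ ω * X₄ ω + X₁ ω ^ 2 * X₅ ω) /
        S ^ ((3:ℝ)/2)| ^ (1 + α)
      ≤ (Y / S ^ ((1:ℝ)/2)) ^ (1 + α) :=
        Real.rpow_le_rpow (abs_nonneg _) hdiv hp0
    _ = Y ^ (1 + α) * S ^ (-q) := by
        rw [Real.div_rpow hY0 hR0.le, ← Real.rpow_mul hS0.le,
          show (1:ℝ)/2 * (1 + α) = q by rw [hq_def]; ring,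
          Real.rpow_neg hS0.le, div_eq_mul_inv]
    _ ≤ (9 * (1 + ‖(X₃ ω, X₄ ω, X₅ ω)‖ ^ 2)) * (K ^ q * (|Z₁ ω| ^ (-q) * |Z₂ ω| ^ (-q))) := by
        apply mul_le_mul hYV hSq (Real.rpow_nonneg hS0.le _) (by positivity)
    _ = K ^ q * ((|Z₁ ω| ^ (-q) * |Z₂ ω| ^ (-q)) * (9 * (1 + ‖(X₃ ω, X₄ ω, X₅ ω)‖ ^ 2))) := by
        ring
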